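/- arXiv:2305.09609 — 2 statements merged into one kernel-verified Lean document; each statement's English description precedes it below -/
import Mathlib

section
/- For all real numbers ξ and η and every real p ≥ 1, one has |ξ⁻ − η⁻|^p ≤ |ξ − η|^{p−2}·(ξ − η)·(η⁻ − ξ⁻), where ξ⁻ := max{0, −ξ} denotes the negative part. -/
open Real

lemma neg_part_prod_eq (ξ η : ℝ) :
    (ξ - η) * (max 0 (-η) - max 0 (-ξ)) = |ξ - η| * |max 0 (-ξ) - max 0 (-η)| := by
  rcases le_total ξ η with h | h
  · have hm : max 0 (-η) ≤ max 0 (-ξ) := max_le_max le_rfl (by linarith)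
    rw [abs_of_nonpos (by linarith : ξ - η ≤ 0),
      abs_of_nonneg (by linarith : (0:ℝ) ≤ max 0 (-ξ) - max 0 (-η))]
    ring
  · have hm : max 0 (-ξ) ≤ max 0 (-η) := max_le_max le_rfl (by linarith)
    rw [abs_of_nonneg (by linarith : (0:ℝ) ≤ ξ - η),
      abs_of_nonpos (by linarith : max 0 (-ξ) - max 0 (-η) ≤ 0)]
    ring

lemma neg_part_lip (ξ η : ℝ) : |max 0 (-ξ) - max 0 (-η)| ≤ |ξ - η| := by
  have h := abs_max_sub_max_le_abs (-ξ) (-η) 0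
  rw [max_comm 0 (-ξ), max_comm 0 (-η)]
  calc |max (-ξ) 0 - max (-η) 0| ≤ |(-ξ) - (-η)| := h
    _ = |ξ - η| := by rw [show (-ξ) - (-η) = -(ξ - η) by ring, abs_neg]

/-- For all real `ξ, η` and every real `p ≥ 1`,
`|ξ⁻ − η⁻|^p ≤ |ξ − η|^{p−2} (ξ − η) (η⁻ − ξ⁻)`, where `t⁻ = max 0 (−t)`
(the expression `|ξ−η|^{p−2}(ξ−η)` being `0` when `ξ = η`). -/
theorem neg_part_pointwise_ineq (p : ℝ) (hp : 1 ≤ p) (ξ η : ℝ) :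
    |max 0 (-ξ) - max 0 (-η)| ^ p ≤
      |ξ - η| ^ (p - 2) * (ξ - η) * (max 0 (-η) - max 0 (-ξ)) := by
  set a := |max 0 (-ξ) - max 0 (-η)| with ha
  set b := |ξ - η| with hb
  have ha0 : 0 ≤ a := abs_nonneg _
  have hb0 : 0 ≤ b := abs_nonneg _
  have hab : a ≤ b := neg_part_lip ξ η
  have hprod : (ξ - η) * (max 0 (-η) - max 0 (-ξ)) = b * a := neg_part_prod_eq ξ η
  have hrhs : b ^ (p - 2) * (ξ - η) * (max 0 (-η) - max 0 (-ξ)) = b ^ (p - 2) * (b * a) := by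
    rw [mul_assoc, hprod]
  rw [hrhs]
  rcases eq_or_lt_of_le hb0 with hb0' | hb0'
  · have hae : a = 0 := le_antisymm (by linarith) ha0
    rw [hae, ← hb0']
    simp [Real.zero_rpow (by linarith : p ≠ 0)]
  · have hbp : b ^ (p - 2) * (b * a) = b ^ (p - 1) * a := by
      have : b ^ (p - 2) * b ^ (1:ℝ) = b ^ (p - 2 + 1) := (Real.rpow_add hb0' _ _).symm
      rw [Real.rpow_one] at this
      rw [show p - 2 + 1 = p - 1 by ring] at this
      rw [← this]; ring
    rw [hbp]
    rcases eq_or_lt_of_le ha0 with ha0' | ha0'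
    · rw [← ha0']
      rw [Real.zero_rpow (by linarith : p ≠ 0)]
      positivity
    · have hap : a ^ p = a ^ (p - 1) * a := by
        have : a ^ (p - 1) * a ^ (1:ℝ) = a ^ (p - 1 + 1) := (Real.rpow_add ha0' _ _).symm
        rw [Real.rpow_one, show p - 1 + 1 = p by ring] at this
        rw [← this]
      rw [hap]
      exact mul_le_mul_of_nonneg_right (Real.rpow_le_rpow ha0 hab (by linarith)) ha0
end

section
/- Let p > 1 and for k ≥ 1 set a_k = (2k!(k+2)!−1)/(4(k+1)!) and b_k = (2k!(k+2)!+1)/(4(k+1)!). Suppose F : [0,∞) → [0,∞) is nondecreasing, F(t) = (k+1)!^p − 2^p for all t ∈ [b_k, a_{k+1}] and all k ≥ 1. Then liminf_{t→∞} F(t)/t^p = 0 and limsup_{t→∞} F(t)/t^p = ∞. -/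
open Set Nat Filter

set_option maxHeartbeats 1000000 in
/-- If `F : [0,∞) → [0,∞)` is nondecreasing and constantly equal to `(k+1)!^p − 2^p`
on each interval `[b_k, a_{k+1}]` (with `a_k, b_k` the factorial intervals of the
example), then `liminf_{t→∞} F(t)/t^p = 0`. -/
theorem plateau_liminf_zero (p : ℝ) (hp : 1 < p)
    (a b : ℕ → ℝ) (F : ℝ → ℝ)
    (ha : ∀ k, a k = (2 * (k.factorial : ℝ) * ((k + 2).factorial : ℝ) - 1) /
        (4 * ((k + 1).factorial : ℝ)))
    (hb : ∀ k, b k = (2 * (k.factorial : ℝ) * ((k + 2).factorial : ℝ) + 1) /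
        (4 * ((k + 1).factorial : ℝ)))
    (hFnonneg : ∀ t, 0 ≤ t → 0 ≤ F t)
    (hFmono : ∀ t₁ t₂, 0 ≤ t₁ → t₁ ≤ t₂ → F t₁ ≤ F t₂)
    (hFplateau : ∀ k, 1 ≤ k → ∀ t ∈ Set.Icc (b k) (a (k + 1)),
        F t = (((k + 1).factorial : ℝ)) ^ p - 2 ^ p) :
    Filter.liminf (fun t : ℝ => F t / t ^ p) atTop = 0 := by
  have hp0 : 0 < p := lt_trans one_pos hp
  have hfacpos : ∀ n : ℕ, (0:ℝ) < (n.factorial : ℝ) := fun n => by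
    exact_mod_cast n.factorial_pos
  have hfac1 : ∀ n : ℕ, (1:ℝ) ≤ (n.factorial : ℝ) := fun n => by
    exact_mod_cast n.factorial_pos
  -- lower bound for a (k+1)
  have hA_lb : ∀ k : ℕ, ((k + 1).factorial : ℝ) * (k + 3) / 4 ≤ a (k + 1) := by
    intro k
    rw [ha (k + 1)]
    have hf3 : (((k + 1) + 2).factorial : ℝ) = ((k : ℝ) + 3) * ((k + 2).factorial : ℝ) := by
      have : (k + 1) + 2 = (k + 2) + 1 := by ring
      rw [this, Nat.factorial_succ]
      push_cast; ring
    have hf2pos := hfacpos (k + 2)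
    have hf2one := hfac1 (k + 2)
    have hf1one := hfac1 (k + 1)
    rw [div_le_div_iff₀ (by norm_num) (by positivity), hf3]
    push_cast
    nlinarith [mul_pos (hfacpos (k + 1)) hf2pos,
      mul_le_mul hf1one hf2one zero_le_one (le_of_lt (hfacpos (k + 1))),
      Nat.cast_nonneg (α := ℝ) k]
  have hA_pos : ∀ k : ℕ, 0 < a (k + 1) := by
    intro k
    calc (0:ℝ) < ((k + 1).factorial : ℝ) * (k + 3) / 4 := by positivity
    _ ≤ a (k + 1) := hA_lb k
  -- b k ≤ a (k+1)
  have hba : ∀ k : ℕ, 1 ≤ k → b k ≤ a (k + 1) := by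
    intro k hk
    rw [hb k, ha (k + 1)]
    have hK : (1:ℝ) ≤ (k : ℝ) := by exact_mod_cast hk
    set f0 : ℝ := (k.factorial : ℝ) with hf0def
    have hf0 : (1:ℝ) ≤ f0 := hfac1 k
    have hf1 : ((k + 1).factorial : ℝ) = ((k : ℝ) + 1) * f0 := by
      rw [Nat.factorial_succ]; push_cast; ring
    have hf2 : ((k + 2).factorial : ℝ) = ((k : ℝ) + 2) * (((k : ℝ) + 1) * f0) := by
      have : k + 2 = (k + 1) + 1 := rfl
      rw [this, Nat.factorial_succ]; push_cast; rw [hf1]; ring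
    have hf3 : (((k + 1) + 2).factorial : ℝ) =
        ((k : ℝ) + 3) * (((k : ℝ) + 2) * (((k : ℝ) + 1) * f0)) := by
      have : (k + 1) + 2 = (k + 2) + 1 := by ring
      rw [this, Nat.factorial_succ]; push_cast; rw [hf2]; ring
    rw [hf1, hf2, hf3]
    set K : ℝ := (k : ℝ) with hKdef
    have hf0sq : (1:ℝ) ≤ f0 ^ 2 := by nlinarith
    have hP : (0:ℝ) ≤ (K + 1) * (K + 2) * (K ^ 2 + 3 * K + 1) := by positivity
    have h2P : K + 3 ≤ 2 * ((K + 1) * (K + 2) * (K ^ 2 + 3 * K + 1)) := by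
      nlinarith [sq_nonneg K, sq_nonneg (K ^ 2 + 3 * K)]
    have hmid : (2 * f0 ^ 2 * (K + 2) * (K + 1) + 1) * (K + 2) ≤
        2 * f0 ^ 2 * (K + 1) ^ 2 * (K + 2) * (K + 3) - 1 := by
      nlinarith [mul_le_mul hf0sq (le_refl ((K + 1) * (K + 2) * (K ^ 2 + 3 * K + 1)))
        hP (by positivity : (0:ℝ) ≤ f0 ^ 2)]
    rw [div_le_div_iff₀ (by nlinarith) (by nlinarith)]
    nlinarith [mul_le_mul_of_nonneg_right hmid
      (by nlinarith : (0:ℝ) ≤ 4 * ((K + 1) * f0))]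
  -- key bound on the ratio at a (k+1)
  have hkey : ∀ k : ℕ, 1 ≤ k → F (a (k + 1)) / (a (k + 1)) ^ p ≤ 4 / ((k : ℝ) + 3) := by
    intro k hk
    have hA := hA_pos k
    have hAlb := hA_lb k
    have hF : F (a (k + 1)) = (((k + 1).factorial : ℝ)) ^ p - 2 ^ p :=
      hFplateau k hk (a (k + 1)) ⟨hba k hk, le_refl _⟩
    have h2p : (0:ℝ) ≤ (2:ℝ) ^ p := Real.rpow_nonneg (by norm_num) p
    have hf1pos := hfacpos (k + 1)
    -- F(a)/(a^p) ≤ ((k+1)!/a)^p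
    have h1 : F (a (k + 1)) / (a (k + 1)) ^ p ≤
        (((k + 1).factorial : ℝ) / a (k + 1)) ^ p := by
      rw [Real.div_rpow (le_of_lt hf1pos) (le_of_lt hA)]
      gcongr
      rw [hF]; linarith
    -- ratio x := (k+1)!/a ∈ (0,1]
    have hx_pos : 0 < ((k + 1).factorial : ℝ) / a (k + 1) := div_pos hf1pos hA
    have hx_le : ((k + 1).factorial : ℝ) / a (k + 1) ≤ 4 / ((k : ℝ) + 3) := by
      rw [div_le_div_iff₀ hA (by positivity)]
      linarith
    have hx_le_one : ((k + 1).factorial : ℝ) / a (k + 1) ≤ 1 := by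
      have : (4:ℝ) / ((k : ℝ) + 3) ≤ 1 := by
        rw [div_le_one (by positivity)]
        have : (1:ℝ) ≤ (k : ℝ) := by exact_mod_cast hk
        linarith
      linarith
    have h2 : (((k + 1).factorial : ℝ) / a (k + 1)) ^ p ≤
        ((k + 1).factorial : ℝ) / a (k + 1) := by
      calc (((k + 1).factorial : ℝ) / a (k + 1)) ^ p
          ≤ (((k + 1).factorial : ℝ) / a (k + 1)) ^ (1:ℝ) :=
            Real.rpow_le_rpow_of_exponent_ge hx_pos hx_le_one (le_of_lt hp)
        _ = ((k + 1).factorial : ℝ) / a (k + 1) := Real.rpow_one _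
    linarith
  -- a (k+1) ≥ k
  have hA_ge : ∀ k : ℕ, (k : ℝ) ≤ a (k + 1) := by
    intro k
    refine le_trans ?_ (hA_lb k)
    have h1 : ((k : ℝ) + 1) ≤ ((k + 1).factorial : ℝ) := by
      exact_mod_cast Nat.self_le_factorial (k + 1)
    have hk0 : (0:ℝ) ≤ (k : ℝ) := Nat.cast_nonneg k
    nlinarith
  -- frequently F t / t^p ≤ ε
  have hfreq : ∀ ε : ℝ, 0 < ε → ∃ᶠ t in atTop, F t / t ^ p ≤ ε := by
    intro ε hε
    rw [frequently_atTop]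
    intro N
    set k : ℕ := max 1 (max ⌈4 / ε⌉₊ ⌈N⌉₊) with hkdef
    have hk1 : 1 ≤ k := le_max_left _ _
    refine ⟨a (k + 1), ?_, ?_⟩
    · refine le_trans ?_ (hA_ge k)
      calc N ≤ (⌈N⌉₊ : ℝ) := Nat.le_ceil N
        _ ≤ (k : ℝ) := by
          exact_mod_cast le_trans (le_max_right ⌈4 / ε⌉₊ ⌈N⌉₊) (le_max_right 1 _)
    · refine le_trans (hkey k hk1) ?_
      have h1 : (4 / ε : ℝ) ≤ (k : ℝ) := by
        calc (4 / ε : ℝ) ≤ (⌈4 / ε⌉₊ : ℝ) := Nat.le_ceil _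
          _ ≤ (k : ℝ) := by
            exact_mod_cast le_trans (le_max_left ⌈4 / ε⌉₊ ⌈N⌉₊) (le_max_right 1 _)
      rw [div_le_iff₀ (by positivity)]
      have h2 : 4 ≤ ε * (k : ℝ) := by
        rw [div_le_iff₀ hε] at h1; linarith [mul_comm ε (k:ℝ)]
      nlinarith
  -- eventual nonnegativity
  have hev : ∀ᶠ t in (atTop : Filter ℝ), 0 ≤ F t / t ^ p := by
    filter_upwards [eventually_ge_atTop (1:ℝ)] with t ht
    exact div_nonneg (hFnonneg t (by linarith)) (le_of_lt (Real.rpow_pos_of_pos (by linarith) p))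
  have hbdd : IsBoundedUnder (· ≥ ·) (atTop : Filter ℝ) (fun t => F t / t ^ p) := ⟨0, by
    rwa [eventually_map]⟩
  have hcob : IsCoboundedUnder (· ≥ ·) (atTop : Filter ℝ) (fun t => F t / t ^ p) :=
    IsCoboundedUnder.of_frequently_le (hfreq 1 one_pos)
  refine le_antisymm ?_ (le_liminf_of_le hcob hev)
  refine le_of_forall_pos_le_add fun ε hε => ?_
  have := liminf_le_of_frequently_le (hfreq ε hε) hbdd
  linarith
end
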